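/- Let A ⊂ R^d be a finite set, N ⊆ A nonempty, and x, x' ∈ R^d. Define A' := {a ∈ A : nn_{N∪{x'}}(a) = x'} (points whose nearest element of N∪{x'} is x') and let c := (1/|A'|)∑_{a∈A'} a, assuming A' nonempty. Then ∑_{a∈A} ||a - nn_{N∪{c}}(a)||² ≤ ∑_{a∈A} ||a - nn_{N∪{x'}}(a)||². -/

import Mathlib

/-- `y` is a nearest neighbor of `x` in the finite set `N`. -/
def IsNN {d : ℕ} (N : Finset (EuclideanSpace ℝ (Fin d)))
    (x y : EuclideanSpace ℝ (Fin d)) : Prop :=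
  y ∈ N ∧ ∀ z ∈ N, dist x y ≤ dist x z

lemma centroid_min {E : Type*} [NormedAddCommGroup E] [InnerProductSpace ℝ E]
    (s : Finset E) (hs : s.Nonempty) (y : E) :
    ∑ a ∈ s, ‖a - (s.card : ℝ)⁻¹ • ∑ b ∈ s, b‖ ^ 2 ≤ ∑ a ∈ s, ‖a - y‖ ^ 2 := by
  set c : E := (s.card : ℝ)⁻¹ • ∑ b ∈ s, b with hc
  have hcard : (s.card : ℝ) ≠ 0 := by
    exact_mod_cast Finset.card_ne_zero_of_mem hs.choose_spec
  have hsum0 : ∑ a ∈ s, (a - c) = 0 := by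
    rw [Finset.sum_sub_distrib, Finset.sum_const, ← Nat.cast_smul_eq_nsmul ℝ, hc, smul_smul,
      mul_inv_cancel₀ hcard, one_smul, sub_self]
  have expand : ∀ a ∈ s, ‖a - y‖ ^ 2 =
      ‖a - c‖ ^ 2 + 2 * inner ℝ (a - c) (c - y) + ‖c - y‖ ^ 2 := by
    intro a _
    have : a - y = (a - c) + (c - y) := by abel
    rw [this, norm_add_sq_real]
  rw [Finset.sum_congr rfl expand]
  have : ∑ a ∈ s, (‖a - c‖ ^ 2 + 2 * inner ℝ (a - c) (c - y) + ‖c - y‖ ^ 2) =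
      ∑ a ∈ s, ‖a - c‖ ^ 2 + 2 * inner ℝ (∑ a ∈ s, (a - c)) (c - y) +
        s.card * ‖c - y‖ ^ 2 := by
    rw [Finset.sum_add_distrib, Finset.sum_add_distrib, Finset.sum_const,
      sum_inner, Finset.mul_sum, nsmul_eq_mul]
  rw [this, hsum0, inner_zero_left, mul_zero, add_zero]
  nlinarith [sq_nonneg ‖c - y‖, Nat.cast_nonneg (α := ℝ) s.card]

theorem stmt_11 {d : ℕ} [DecidableEq (EuclideanSpace ℝ (Fin d))]
    (A N : Finset (EuclideanSpace ℝ (Fin d))) (hNA : N ⊆ A) (hN : N.Nonempty)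
    (x x' : EuclideanSpace ℝ (Fin d))
    (nn1 nn2 : EuclideanSpace ℝ (Fin d) → EuclideanSpace ℝ (Fin d))
    (hnn1 : ∀ a, IsNN (insert x' N) a (nn1 a))
    (A' : Finset (EuclideanSpace ℝ (Fin d))) (hA' : A' = A.filter (fun a => nn1 a = x'))
    (hA'ne : A'.Nonempty)
    (c : EuclideanSpace ℝ (Fin d)) (hc : c = (A'.card : ℝ)⁻¹ • ∑ a ∈ A', a)
    (hnn2 : ∀ a, IsNN (insert c N) a (nn2 a)) :
    ∑ a ∈ A, dist a (nn2 a) ^ 2 ≤ ∑ a ∈ A, dist a (nn1 a) ^ 2 := by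
  have hA'sub : A' ⊆ A := by rw [hA']; exact Finset.filter_subset _ _
  rw [← Finset.sum_sdiff hA'sub, ← Finset.sum_sdiff hA'sub (f := fun a => dist a (nn1 a) ^ 2)]
  have h1 : ∑ a ∈ A \ A', dist a (nn2 a) ^ 2 ≤ ∑ a ∈ A \ A', dist a (nn1 a) ^ 2 := by
    apply Finset.sum_le_sum
    intro a ha
    obtain ⟨haA, haA'⟩ := Finset.mem_sdiff.mp ha
    have hne : nn1 a ≠ x' := by
      intro h
      exact haA' (by rw [hA']; exact Finset.mem_filter.mpr ⟨haA, h⟩)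
    have hmem : nn1 a ∈ N := by
      rcases Finset.mem_insert.mp (hnn1 a).1 with h | h
      · exact absurd h hne
      · exact h
    have := (hnn2 a).2 (nn1 a) (Finset.mem_insert_of_mem hmem)
    exact pow_le_pow_left₀ dist_nonneg this 2
  have h2 : ∑ a ∈ A', dist a (nn2 a) ^ 2 ≤ ∑ a ∈ A', dist a (nn1 a) ^ 2 := by
    calc ∑ a ∈ A', dist a (nn2 a) ^ 2 ≤ ∑ a ∈ A', dist a c ^ 2 := by
          apply Finset.sum_le_sum
          intro a _
          exact pow_le_pow_left₀ dist_nonneg ((hnn2 a).2 c (Finset.mem_insert_self _ _)) 2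
      _ ≤ ∑ a ∈ A', dist a x' ^ 2 := by
          simp only [dist_eq_norm, hc]
          exact centroid_min A' hA'ne x'
      _ = ∑ a ∈ A', dist a (nn1 a) ^ 2 := by
          apply Finset.sum_congr rfl
          intro a ha
          rw [hA'] at ha
          rw [(Finset.mem_filter.mp ha).2]
  linarith
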